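/- With notation as in the SAT reduction for boolean conjunctive queries: the boolean query q (modeled by its family 𝒲 of minimal witnesses) is certain on I (i.e., true on every repair) if and only if the CNF formula φ = (⋀_{G∈𝒢} ⋁_{f_i∈G} x_i) ∧ (⋀_{W∈𝒲} ⋁_{f_i∈W} ¬x_i) is unsatisfiable. -/
import Mathlib


/-- The boolean query (given by its minimal-witness family `𝒲`) is certain on
`I` (true on every repair) iff the CNF formula `φ` of the reduction is
unsatisfiable. -/
theorem stmt_2 {α : Type*} [DecidableEq α]
    (I : Finset α) (𝒢 : Finset (Finset α)) (𝒲 : Finset (Finset α))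
    (hne : ∀ G ∈ 𝒢, G.Nonempty) (hsub : ∀ G ∈ 𝒢, G ⊆ I)
    (hdisj : ∀ G ∈ 𝒢, ∀ G' ∈ 𝒢, G ≠ G' → Disjoint G G')
    (hcover : ∀ f ∈ I, ∃ G ∈ 𝒢, f ∈ G)
    (hW : ∀ W ∈ 𝒲, W ⊆ I ∧ W.Nonempty) :
    (∀ J : Finset α, J ⊆ I → (∀ G ∈ 𝒢, (J ∩ G).card = 1) →
        ∃ W ∈ 𝒲, W ⊆ J) ↔
    ¬ (∃ a : α → Bool,
        (∀ G ∈ 𝒢, ∃ f ∈ G, a f = true) ∧ (∀ W ∈ 𝒲, ∃ f ∈ W, a f = false)) := by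
  classical
  constructor
  · rintro hcert ⟨a, h1, h2⟩
    choose pick hpickmem hpicka using h1
    set J : Finset α := 𝒢.attach.image (fun G => pick G.1 G.2) with hJ
    have hmemJ : ∀ f, f ∈ J ↔ ∃ G, ∃ hG : G ∈ 𝒢, pick G hG = f := by
      intro f; simp [hJ]
    have hJI : J ⊆ I := by
      intro f hf
      obtain ⟨G, hG, rfl⟩ := (hmemJ f).mp hf
      exact hsub G hG (hpickmem G hG)
    have hcard : ∀ G ∈ 𝒢, (J ∩ G).card = 1 := by
      intro G hG
      have hset : J ∩ G = {pick G hG} := by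
        ext f
        simp only [Finset.mem_inter, Finset.mem_singleton]
        constructor
        · rintro ⟨hfJ, hfG⟩
          obtain ⟨G', hG', rfl⟩ := (hmemJ f).mp hfJ
          by_cases hGG : G' = G
          · subst hGG; rfl
          · exact absurd hfG
              (Finset.disjoint_left.mp (hdisj G' hG' G hG hGG) (hpickmem G' hG'))
        · rintro rfl
          exact ⟨(hmemJ _).mpr ⟨G, hG, rfl⟩, hpickmem G hG⟩
      rw [hset, Finset.card_singleton]
    obtain ⟨W, hW𝒲, hWJ⟩ := hcert J hJI hcard
    obtain ⟨f, hfW, hfa⟩ := h2 W hW𝒲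
    obtain ⟨G, hG, rfl⟩ := (hmemJ f).mp (hWJ hfW)
    rw [hpicka G hG] at hfa
    exact absurd hfa (by simp)
  · intro hunsat J hJI hJcard
    by_contra hno
    push_neg at hno
    apply hunsat
    refine ⟨fun f => decide (f ∈ J), ?_, ?_⟩
    · intro G hG
      obtain ⟨f, hf⟩ := Finset.card_eq_one.mp (hJcard G hG)
      have hfm : f ∈ J ∩ G := hf ▸ Finset.mem_singleton_self f
      obtain ⟨hfJ, hfG⟩ := Finset.mem_inter.mp hfm
      exact ⟨f, hfG, by simp [hfJ]⟩
    · intro W hWmem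
      obtain ⟨f, hfW, hfJ⟩ := Finset.not_subset.mp (hno W hWmem)
      exact ⟨f, hfW, by simp [hfJ]⟩
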